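/- Let Ω ⊂ ℝ^n be a bounded domain, p ≥ 1, and ν a probability measure on Ω. If μ = u·ℒ^n minimizes 𝔉^p_ν over probability measures on Ω and 𝔉^p_ν(μ) < +∞, then f'(u) ∈ L¹(Ω) and u·f'(u) ∈ L¹(Ω). -/

import Mathlib

open MeasureTheory Set Filter Topology Metric
open scoped ENNReal NNReal

noncomputable section

/-- Euclidean space ℝⁿ. -/
abbrev Rn (n : ℕ) := EuclideanSpace ℝ (Fin n)

/-- `μ` is a probability measure "on `Ω`", i.e. giving no mass to the complement of `Ω`. -/
def ProbOn {n : ℕ} (Ω : Set (Rn n)) (μ : Measure (Rn n)) : Prop :=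
  IsProbabilityMeasure μ ∧ μ Ωᶜ = 0

/-- Transport plans (couplings) between two measures:  probability measures on the
product space whose marginals are `μ` and `ν`. -/
def Couplings {n : ℕ} (μ ν : Measure (Rn n)) : Set (Measure (Rn n × Rn n)) :=
  {γ | IsProbabilityMeasure γ ∧ γ.map Prod.fst = μ ∧ γ.map Prod.snd = ν}

/-- The Monge–Kantorovich transport cost `T_p(μ,ν) = inf_γ ∫ |x−y|^p dγ`. -/
def Tcost {n : ℕ} (p : ℝ) (μ ν : Measure (Rn n)) : ℝ≥0∞ :=
  ⨅ γ ∈ Couplings μ ν, ∫⁻ z, ENNReal.ofReal (‖z.1 - z.2‖ ^ p) ∂γ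

/-- The measure `u·ℒⁿ` on `Ω` (absolutely continuous with density `u`). -/
def densOn {n : ℕ} (Ω : Set (Rn n)) (u : Rn n → ℝ) : Measure (Rn n) :=
  (volume.restrict Ω).withDensity fun x => ENNReal.ofReal (u x)

/-- `F(μ) = ∫_Ω f(u)` if `μ = u·ℒⁿ` is absolutely continuous, `+∞` otherwise. -/
def Ffun {n : ℕ} (f : ℝ → ℝ) (Ω : Set (Rn n)) (μ : Measure (Rn n)) : ℝ≥0∞ :=
  open scoped Classical in
  if μ ≪ (volume : Measure (Rn n)) then
    ∫⁻ x in Ω, ENNReal.ofReal (f ((μ.rnDeriv volume x).toReal)) else ⊤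

/-- `G(ν) = ∑ᵢ g(aᵢ)` if `ν = ∑ᵢ aᵢ δ_{xᵢ}` is purely atomic (atoms at distinct points),
`+∞` (the infimum over the empty set) otherwise. -/
def Gfun {n : ℕ} (g : ℝ → ℝ) (ν : Measure (Rn n)) : ℝ≥0∞ :=
  ⨅ r : {q : (ℕ → ℝ) × (ℕ → Rn n) //
      (∀ i, 0 ≤ q.1 i) ∧
      (∀ i j, q.1 i ≠ 0 → q.1 j ≠ 0 → q.2 i = q.2 j → i = j) ∧
      ν = Measure.sum fun i => ENNReal.ofReal (q.1 i) • Measure.dirac (q.2 i)},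
    ∑' i, ENNReal.ofReal (g (r.1.1 i))

/-- The total cost functional `𝔉^p(μ,ν) = T_p(μ,ν) + F(μ) + G(ν)`. -/
def FFp {n : ℕ} (p : ℝ) (f g : ℝ → ℝ) (Ω : Set (Rn n)) (μ ν : Measure (Rn n)) : ℝ≥0∞ :=
  Tcost p μ ν + Ffun f Ω μ + Gfun g ν

/-- The functional `𝔉^p_ν(μ) = T_p(μ,ν) + F(μ)` with `ν` fixed. -/
def FFnu {n : ℕ} (p : ℝ) (f : ℝ → ℝ) (Ω : Set (Rn n)) (ν μ : Measure (Rn n)) : ℝ≥0∞ :=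
  Tcost p μ ν + Ffun f Ω μ

/-- A bounded domain: the closure of a nonempty connected bounded open set,
with Lebesgue-negligible boundary. -/
def IsBoundedDomain {n : ℕ} (Ω : Set (Rn n)) : Prop :=
  ∃ U : Set (Rn n), IsOpen U ∧ U.Nonempty ∧ IsConnected U ∧ Bornology.IsBounded U ∧
    Ω = closure U ∧ volume (frontier Ω) = 0

/-- The `c`-transform `χ^c(y) = inf_{x∈Ω} (|x−y|^p − χ(x))` for the cost `c(x,y)=|x−y|^p`. -/
def ctransform {n : ℕ} (Ω : Set (Rn n)) (p : ℝ) (χ : Rn n → ℝ) (y : Rn n) : ℝ :=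
  ⨅ x : Ω, (‖(x : Rn n) - y‖ ^ p - χ x)

/-- `ψ` is `c`-concave on `Ω` (for the cost `|x−y|^p`) if it is a `c`-transform. -/
def CConcave {n : ℕ} (Ω : Set (Rn n)) (p : ℝ) (ψ : Rn n → ℝ) : Prop :=
  ∃ χ : Rn n → ℝ, ∀ y ∈ Ω, ψ y = ctransform Ω p χ y

/-- `ψ` is a Kantorovich potential for the transport from `μ` to `ν` with cost `|x−y|^p`. -/
def IsKantorovichPotential {n : ℕ} (Ω : Set (Rn n)) (p : ℝ)
    (μ ν : Measure (Rn n)) (ψ : Rn n → ℝ) : Prop :=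
  (∀ x ∈ Ω, ∀ y ∈ Ω, ψ x + ctransform Ω p ψ y ≤ ‖x - y‖ ^ p) ∧
  (∫ x in Ω, ψ x ∂μ) + (∫ y in Ω, ctransform Ω p ψ y ∂ν) = (Tcost p μ ν).toReal

/-- `μ` has finite `p`-th moment (i.e. `μ ∈ 𝒲_p`). -/
def FiniteMoment {n : ℕ} (p : ℝ) (μ : Measure (Rn n)) : Prop :=
  ∫⁻ x, ENNReal.ofReal (‖x‖ ^ p) ∂μ < ⊤

/-- Weak-* convergence of a sequence of measures. -/
def WeakStar {n : ℕ} (μs : ℕ → Measure (Rn n)) (μ : Measure (Rn n)) : Prop :=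
  ∀ φ : Rn n → ℝ, Continuous φ →
    Tendsto (fun h => ∫ x, φ x ∂(μs h)) atTop (𝓝 (∫ x, φ x ∂μ))

end

section S1
variable {n : ℕ} {Ω : Set (Rn n)}

-- Ffun of a density measure
lemma Ffun_densOn (hΩmeas : MeasurableSet Ω) (f : ℝ → ℝ) (w : Rn n → ℝ)
    (hw : Measurable w) (hw0 : ∀ x, 0 ≤ w x) :
    Ffun f Ω (densOn Ω w) = ∫⁻ x in Ω, ENNReal.ofReal (f (w x)) := by
  have hg : Measurable (Ω.indicator fun x => ENNReal.ofReal (w x)) :=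
    (ENNReal.measurable_ofReal.comp hw).indicator hΩmeas
  have hdens : densOn Ω w = volume.withDensity (Ω.indicator fun x => ENNReal.ofReal (w x)) :=
    (withDensity_indicator hΩmeas _).symm
  have hac : densOn Ω w ≪ (volume : Measure (Rn n)) := by
    rw [hdens]; exact withDensity_absolutelyContinuous _ _
  have hrn : (densOn Ω w).rnDeriv volume =ᵐ[volume] Ω.indicator fun x => ENNReal.ofReal (w x) := by
    rw [hdens]; exact Measure.rnDeriv_withDensity volume hg
  rw [Ffun, if_pos hac]
  calc ∫⁻ x in Ω, ENNReal.ofReal (f (((densOn Ω w).rnDeriv volume x).toReal))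
      = ∫⁻ x in Ω, ENNReal.ofReal (f ((Ω.indicator (fun x => ENNReal.ofReal (w x)) x).toReal)) := by
        refine lintegral_congr_ae ((ae_restrict_of_ae hrn).mono fun x hx => ?_)
        simp only [hx]
    _ = ∫⁻ x in Ω, ENNReal.ofReal (f (w x)) := by
        refine setLIntegral_congr_fun hΩmeas (fun x hx => ?_)
        rw [indicator_of_mem hx, ENNReal.toReal_ofReal (hw0 x)]

lemma densOn_compl (hΩmeas : MeasurableSet Ω) (w : Rn n → ℝ) :
    densOn Ω w Ωᶜ = 0 := by
  rw [densOn, withDensity_apply _ hΩmeas.compl, Measure.restrict_restrict hΩmeas.compl,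
    compl_inter_self, Measure.restrict_empty, lintegral_zero_measure]

lemma densOn_univ (w : Rn n → ℝ) :
    densOn Ω w univ = ∫⁻ x in Ω, ENNReal.ofReal (w x) := by
  rw [densOn, withDensity_apply _ MeasurableSet.univ, Measure.restrict_univ]

end S1

section S2
variable {n : ℕ} {Ω : Set (Rn n)}

lemma densOn_decomp (hΩmeas : MeasurableSet Ω) (u : Rn n → ℝ) (hu : Measurable u)
    (hu0 : ∀ x, 0 ≤ u x) {ε c : ℝ} (hε0 : 0 ≤ ε) (hε1 : ε ≤ 1) (hc : 0 ≤ c) :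
    densOn Ω (fun x => (1 - ε) * u x + ε * c)
      = ENNReal.ofReal (1 - ε) • densOn Ω u + ENNReal.ofReal ε • densOn Ω (fun _ => c) := by
  unfold densOn
  have h1 : (fun x => ENNReal.ofReal ((1 - ε) * u x + ε * c))
      = (ENNReal.ofReal (1 - ε) • fun x => ENNReal.ofReal (u x))
        + (ENNReal.ofReal ε • fun _ => ENNReal.ofReal c) := by
    funext x
    simp only [Pi.add_apply, Pi.smul_apply, smul_eq_mul]
    rw [ENNReal.ofReal_add (mul_nonneg (by linarith) (hu0 x)) (mul_nonneg hε0 hc),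
      ENNReal.ofReal_mul (by linarith), ENNReal.ofReal_mul hε0]
  rw [h1, withDensity_add_right _ ((measurable_const : Measurable fun _ : Rn n => ENNReal.ofReal c).const_smul _),
    withDensity_smul _ (hu.ennreal_ofReal),
    withDensity_smul _ (measurable_const : Measurable fun _ : Rn n => ENNReal.ofReal c)]

lemma tcost_mix (hΩmeas : MeasurableSet Ω) (hΩb : Bornology.IsBounded Ω)
    (p : ℝ) (hp : 0 ≤ p) (μ ν lam : Measure (Rn n))
    (hν : IsProbabilityMeasure ν) (hνc : ν Ωᶜ = 0)
    (hlam : IsProbabilityMeasure lam) (hlamc : lam Ωᶜ = 0)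
    (hT : Tcost p μ ν ≠ ⊤) {ε : ℝ} (hε0 : 0 ≤ ε) (hε1 : ε ≤ 1) :
    Tcost p (ENNReal.ofReal (1 - ε) • μ + ENNReal.ofReal ε • lam) ν
      ≤ Tcost p μ ν + ENNReal.ofReal ε * ENNReal.ofReal (diam Ω ^ p) := by
  haveI := hν; haveI := hlam
  set cost : Rn n × Rn n → ℝ≥0∞ := fun z => ENNReal.ofReal (‖z.1 - z.2‖ ^ p) with hcost
  set k := ENNReal.ofReal ε * ENNReal.ofReal (diam Ω ^ p) with hk
  have hkfin : k ≠ ⊤ := ENNReal.mul_ne_top ENNReal.ofReal_ne_top ENNReal.ofReal_ne_top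
  have step : ∀ γ ∈ Couplings μ ν,
      Tcost p (ENNReal.ofReal (1 - ε) • μ + ENNReal.ofReal ε • lam) ν
        ≤ (∫⁻ z, cost z ∂γ) + k := by
    intro γ hγ
    obtain ⟨hγP, hγ1, hγ2⟩ := hγ
    haveI := hγP
    set γ' := lam.prod ν with hγ'
    set γε := ENNReal.ofReal (1 - ε) • γ + ENNReal.ofReal ε • γ' with hγε
    have hmem : γε ∈ Couplings (ENNReal.ofReal (1 - ε) • μ + ENNReal.ofReal ε • lam) ν := by
      refine ⟨⟨?_⟩, ?_, ?_⟩
      · simp only [hγε, Measure.add_apply, Measure.smul_apply, smul_eq_mul]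
        rw [measure_univ, measure_univ, mul_one, mul_one, ← ENNReal.ofReal_add (by linarith) hε0]
        norm_num
      · rw [hγε, Measure.map_add _ _ measurable_fst, Measure.map_smul, Measure.map_smul,
          hγ1, hγ', Measure.map_fst_prod, measure_univ, one_smul]
      · rw [hγε, Measure.map_add _ _ measurable_snd, Measure.map_smul, Measure.map_smul,
          hγ2, hγ', Measure.map_snd_prod, measure_univ, one_smul, ← add_smul,
          ← ENNReal.ofReal_add (by linarith) hε0]
        norm_num
    have hγ'null : γ' ((Ω ×ˢ Ω)ᶜ) = 0 := by
      have hsub : (Ω ×ˢ Ω)ᶜ ⊆ (Ωᶜ ×ˢ univ) ∪ (univ ×ˢ Ωᶜ) := by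
        intro z hz
        simp only [mem_compl_iff, mem_prod, mem_union, mem_univ, and_true, true_and] at *
        tauto
      refine measure_mono_null hsub (measure_union_null ?_ ?_)
      · rw [hγ', Measure.prod_prod, hlamc, zero_mul]
      · rw [hγ', Measure.prod_prod, hνc, mul_zero]
    have hγ'bound : ∫⁻ z, cost z ∂γ' ≤ ENNReal.ofReal (diam Ω ^ p) := by
      have hae : ∀ᵐ z ∂γ', z ∈ Ω ×ˢ Ω := by
        rw [ae_iff]
        convert hγ'null using 2
        rfl
      calc ∫⁻ z, cost z ∂γ' ≤ ∫⁻ _, ENNReal.ofReal (diam Ω ^ p) ∂γ' := by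
            refine lintegral_mono_ae (hae.mono fun z hz => ?_)
            refine ENNReal.ofReal_le_ofReal (Real.rpow_le_rpow (norm_nonneg _) ?_ hp)
            rw [← dist_eq_norm]
            exact dist_le_diam_of_mem hΩb hz.1 hz.2
        _ = ENNReal.ofReal (diam Ω ^ p) := by rw [lintegral_const, measure_univ, mul_one]
    have hcosteq : ∫⁻ z, cost z ∂γε
        = ENNReal.ofReal (1 - ε) * ∫⁻ z, cost z ∂γ + ENNReal.ofReal ε * ∫⁻ z, cost z ∂γ' := by
      rw [hγε, lintegral_add_measure, lintegral_smul_measure, lintegral_smul_measure, smul_eq_mul, smul_eq_mul]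
    have : Tcost p (ENNReal.ofReal (1 - ε) • μ + ENNReal.ofReal ε • lam) ν
        ≤ ∫⁻ z, cost z ∂γε := iInf₂_le γε hmem
    refine this.trans ?_
    rw [hcosteq]
    refine add_le_add ?_ (mul_le_mul_right hγ'bound _)
    calc ENNReal.ofReal (1 - ε) * ∫⁻ z, cost z ∂γ ≤ 1 * ∫⁻ z, cost z ∂γ := by
          exact mul_le_mul_left (ENNReal.ofReal_le_one.mpr (by linarith)) _
      _ = ∫⁻ z, cost z ∂γ := one_mul _
  refine ENNReal.le_of_forall_pos_le_add fun δ hδ hlt => ?_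
  have hTlt : Tcost p μ ν < Tcost p μ ν + δ :=
    ENNReal.lt_add_right hT (by exact_mod_cast hδ.ne')
  rw [Tcost, iInf_lt_iff] at hTlt
  obtain ⟨γ, hγlt⟩ := hTlt
  rw [iInf_lt_iff] at hγlt
  obtain ⟨hγmem, hγlt⟩ := hγlt
  calc Tcost p (ENNReal.ofReal (1 - ε) • μ + ENNReal.ofReal ε • lam) ν
      ≤ (∫⁻ z, cost z ∂γ) + k := step γ hγmem
    _ ≤ (Tcost p μ ν + δ) + k := by gcongr; exact hγlt.le
    _ = Tcost p μ ν + k + δ := by ring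

lemma aux_mono {f f' : ℝ → ℝ} (hconv : ConvexOn ℝ (Ici 0) f)
    (hd : ∀ t ∈ Ici (0:ℝ), HasDerivWithinAt f (f' t) (Ici 0) t) :
    MonotoneOn f' (Ici 0) := by
  intro a ha b hb hab
  rcases eq_or_lt_of_le hab with rfl | h
  · exact le_rfl
  calc f' a ≤ slope f a b := hconv.le_slope_of_hasDerivWithinAt ha hb h (hd a ha)
    _ ≤ f' b := hconv.slope_le_of_hasDerivWithinAt ha hb h (hd b hb)

lemma aux_tangent {f f' : ℝ → ℝ} (hconv : ConvexOn ℝ (Ici 0) f)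
    (hd : ∀ t ∈ Ici (0:ℝ), HasDerivWithinAt f (f' t) (Ici 0) t)
    {a b : ℝ} (ha : a ∈ Ici (0:ℝ)) (hb : b ∈ Ici (0:ℝ)) :
    f a + f' a * (b - a) ≤ f b := by
  rcases lt_trichotomy a b with h | rfl | h
  · have hs := hconv.le_slope_of_hasDerivWithinAt ha hb h (hd a ha)
    rw [slope_def_field] at hs
    have h' : 0 < b - a := by linarith
    rw [le_div_iff₀ h'] at hs
    linarith
  · simp
  · have hs := hconv.slope_le_of_hasDerivWithinAt hb ha h (hd a ha)
    rw [slope_def_field] at hs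
    have h' : 0 < a - b := by linarith
    rw [div_le_iff₀ h'] at hs
    linarith

/-- for a minimizer `μ = u·ℒⁿ` of `𝔉^p_ν`, both `f'(u)` and
`u f'(u)` are in `L¹(Ω)`. -/
theorem statement_19 {n : ℕ} (Ω : Set (Rn n)) (hΩ : IsBoundedDomain Ω)
    (p : ℝ) (hp : 1 ≤ p) (f f' : ℝ → ℝ)
    (hf_nonneg : ∀ t : ℝ, 0 ≤ t → 0 ≤ f t) (hf0 : f 0 = 0)
    (hf_sconv : StrictConvexOn ℝ (Ici 0) f)
    (hf_deriv : ∀ t ∈ Ici (0:ℝ), HasDerivWithinAt f (f' t) (Ici 0) t)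
    (hf'_cont : ContinuousOn f' (Ici 0)) (hf'0 : f' 0 = 0)
    (hf_super : Tendsto (fun t => f t / t) atTop atTop)
    (ν : Measure (Rn n)) (hνP : ProbOn Ω ν)
    (u : Rn n → ℝ) (hu_meas : Measurable u) (hu_nonneg : ∀ x, 0 ≤ u x)
    (μ : Measure (Rn n)) (hμ : μ = densOn Ω u) (hμP : ProbOn Ω μ)
    (hmin : ∀ μ' : Measure (Rn n), ProbOn Ω μ' → FFnu p f Ω ν μ ≤ FFnu p f Ω ν μ')
    (hfin : FFnu p f Ω ν μ < ⊤) :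
    IntegrableOn (fun x => f' (u x)) Ω volume ∧
    IntegrableOn (fun x => u x * f' (u x)) Ω volume := by
  classical
  obtain ⟨U, hUopen, hUne, -, hUb, hΩeq, -⟩ := hΩ
  have hΩclosed : IsClosed Ω := by rw [hΩeq]; exact isClosed_closure
  have hΩmeas : MeasurableSet Ω := hΩclosed.measurableSet
  have hΩb : Bornology.IsBounded Ω := by rw [hΩeq]; exact hUb.closure
  have hvol_lt : volume Ω < ⊤ := hΩb.measure_lt_top
  have hvol_pos : 0 < volume Ω := by
    refine lt_of_lt_of_le (hUopen.measure_pos volume hUne) (measure_mono ?_)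
    rw [hΩeq]; exact subset_closure
  set V : ℝ := (volume Ω).toReal with hV
  have hVpos : 0 < V := ENNReal.toReal_pos hvol_pos.ne' hvol_lt.ne
  set c : ℝ := V⁻¹ with hcdef
  have hcpos : 0 < c := inv_pos.mpr hVpos
  have hcE : ENNReal.ofReal c = (volume Ω)⁻¹ := by
    rw [hcdef, ENNReal.ofReal_inv_of_pos hVpos, hV, ENNReal.ofReal_toReal hvol_lt.ne]
  set D : ℝ := diam Ω with hD
  have hp0 : (0:ℝ) ≤ p := by linarith
  have hDp0 : 0 ≤ D ^ p := Real.rpow_nonneg diam_nonneg _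
  have hconv : ConvexOn ℝ (Ici 0) f := hf_sconv.convexOn
  have hf'mono : MonotoneOn f' (Ici 0) := aux_mono hconv hf_deriv
  have hf'nonneg : ∀ t : ℝ, 0 ≤ t → 0 ≤ f' t := fun t ht => by
    have h := hf'mono (mem_Ici.mpr le_rfl) (mem_Ici.mpr ht) ht
    rwa [hf'0] at h
  set K : ℝ := c * f' c with hK
  have hKnn : 0 ≤ K := mul_nonneg hcpos.le (hf'nonneg c hcpos.le)
  -- measurability helpers
  have hfcont : ContinuousOn f (Ici 0) := fun t ht => (hf_deriv t ht).continuousWithinAt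
  have hF0 : Continuous (fun t : ℝ => f (max t 0)) :=
    hfcont.comp_continuous (continuous_id.max continuous_const) fun x => mem_Ici.mpr (le_max_right _ _)
  have hF1 : Continuous (fun t : ℝ => f' (max t 0)) :=
    hf'_cont.comp_continuous (continuous_id.max continuous_const) fun x => mem_Ici.mpr (le_max_right _ _)
  have hcomp0 : ∀ w : Rn n → ℝ, Measurable w → (∀ x, 0 ≤ w x) →
      Measurable fun x => f (w x) := by
    intro w hw hw0
    have he : (fun x => f (w x)) = fun x => f (max (w x) 0) :=
      funext fun x => by rw [max_eq_left (hw0 x)]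
    rw [he]; exact hF0.measurable.comp hw
  have hcomp1 : ∀ w : Rn n → ℝ, Measurable w → (∀ x, 0 ≤ w x) →
      Measurable fun x => f' (w x) := by
    intro w hw hw0
    have he : (fun x => f' (w x)) = fun x => f' (max (w x) 0) :=
      funext fun x => by rw [max_eq_left (hw0 x)]
    rw [he]; exact hF1.measurable.comp hw
  have int_of : ∀ g : Rn n → ℝ, Measurable g → (∀ x, 0 ≤ g x) →
      (∫⁻ x in Ω, ENNReal.ofReal (g x)) ≠ ⊤ → IntegrableOn g Ω volume := by
    intro g hg hg0 hfin'
    refine ⟨hg.aestronglyMeasurable, ?_⟩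
    rw [hasFiniteIntegral_iff_ofReal (Eventually.of_forall hg0)]
    exact lt_top_iff_ne_top.mpr hfin'
  -- finiteness pieces
  have hTfin : Tcost p μ ν ≠ ⊤ := by
    intro h; rw [FFnu, h] at hfin; simp at hfin
  have hFfin : Ffun f Ω μ ≠ ⊤ := by
    intro h; rw [FFnu, h] at hfin; simp at hfin
  have hIμ : Ffun f Ω μ = ∫⁻ x in Ω, ENNReal.ofReal (f (u x)) := by
    rw [hμ]; exact Ffun_densOn hΩmeas f u hu_meas hu_nonneg
  have int_fu : IntegrableOn (fun x => f (u x)) Ω volume :=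
    int_of _ (hcomp0 u hu_meas hu_nonneg) (fun x => hf_nonneg _ (hu_nonneg x))
      (by rw [← hIμ]; exact hFfin)
  -- the uniform measure lam
  set lam : Measure (Rn n) := densOn Ω (fun _ => c) with hlamdef
  have hlam_eq : lam = (volume Ω)⁻¹ • volume.restrict Ω := by
    rw [hlamdef, densOn, withDensity_const, hcE]
  have hlamuniv : lam univ = 1 := by
    rw [hlam_eq, Measure.smul_apply, smul_eq_mul, Measure.restrict_apply_univ]
    exact ENNReal.inv_mul_cancel hvol_pos.ne' hvol_lt.ne
  have hlamP : IsProbabilityMeasure lam := ⟨hlamuniv⟩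
  have hlamc : lam Ωᶜ = 0 := densOn_compl hΩmeas _
  have hνprob : IsProbabilityMeasure ν := hνP.1
  have hμprob : IsProbabilityMeasure μ := hμP.1
  -- KEY inequality for ε ∈ (0,1)
  have key : ∀ ε : ℝ, 0 < ε → ε < 1 →
      IntegrableOn (fun x => f ((1 - ε) * u x + ε * c)) Ω volume ∧
      ∫ x in Ω, (f (u x) - f ((1 - ε) * u x + ε * c)) ≤ ε * D ^ p := by
    intro ε hε0 hε1
    set uε : Rn n → ℝ := fun x => (1 - ε) * u x + ε * c with huεdef
    have huεm : Measurable uε := (hu_meas.const_mul _).add_const _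
    have huε0 : ∀ x, 0 ≤ uε x := fun x =>
      add_nonneg (mul_nonneg (by linarith) (hu_nonneg x)) (mul_nonneg hε0.le hcpos.le)
    have hptwise : ∀ x, f (uε x) ≤ (1 - ε) * f (u x) + ε * f c := by
      intro x
      have h := hconv.2 (mem_Ici.mpr (hu_nonneg x)) (mem_Ici.mpr hcpos.le)
        (by linarith : (0:ℝ) ≤ 1 - ε) hε0.le (by ring)
      simpa [smul_eq_mul] using h
    have hdec' : densOn Ω uε = ENNReal.ofReal (1 - ε) • μ + ENNReal.ofReal ε • lam := by
      rw [huεdef, densOn_decomp hΩmeas u hu_meas hu_nonneg hε0.le hε1.le hcpos.le, ← hμ, hlamdef]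
    have hIε_le : (∫⁻ x in Ω, ENNReal.ofReal (f (uε x)))
        ≤ (∫⁻ x in Ω, ENNReal.ofReal (f (u x))) + ENNReal.ofReal (f c) * volume Ω := by
      calc ∫⁻ x in Ω, ENNReal.ofReal (f (uε x))
          ≤ ∫⁻ x in Ω, (ENNReal.ofReal (f (u x)) + ENNReal.ofReal (f c)) := by
            refine lintegral_mono fun x => ?_
            have hr : f (uε x) ≤ f (u x) + f c := by
              have h1 := hptwise x
              have h2 := hf_nonneg _ (hu_nonneg x)
              have h3 := hf_nonneg c hcpos.le
              nlinarith
            exact le_trans (ENNReal.ofReal_le_ofReal hr)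
              (ENNReal.ofReal_add_le)
        _ = (∫⁻ x in Ω, ENNReal.ofReal (f (u x))) + ENNReal.ofReal (f c) * volume Ω := by
            rw [lintegral_add_right _ measurable_const, lintegral_const,
              Measure.restrict_apply_univ]
    have hIεfin : (∫⁻ x in Ω, ENNReal.ofReal (f (uε x))) ≠ ⊤ :=
      ne_top_of_le_ne_top (ENNReal.add_ne_top.mpr ⟨by rw [← hIμ]; exact hFfin,
        ENNReal.mul_ne_top ENNReal.ofReal_ne_top hvol_lt.ne⟩) hIε_le
    have int_fuε : IntegrableOn (fun x => f (uε x)) Ω volume :=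
      int_of _ (hcomp0 uε huεm huε0) (fun x => hf_nonneg _ (huε0 x)) hIεfin
    have hprob : ProbOn Ω (densOn Ω uε) := by
      refine ⟨⟨?_⟩, densOn_compl hΩmeas _⟩
      rw [hdec']
      simp only [Measure.add_apply, Measure.smul_apply, smul_eq_mul]
      rw [measure_univ, measure_univ, mul_one, mul_one,
        ← ENNReal.ofReal_add (by linarith) hε0.le]
      norm_num
    have hminε := hmin (densOn Ω uε) hprob
    rw [FFnu, FFnu] at hminε
    have hTmix := tcost_mix hΩmeas hΩb p hp0 μ ν lam hνprob hνP.2 hlamP hlamc hTfin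
      hε0.le hε1.le
    rw [← hdec'] at hTmix
    have hFF : Ffun f Ω (densOn Ω uε) = ∫⁻ x in Ω, ENNReal.ofReal (f (uε x)) :=
      Ffun_densOn hΩmeas f uε huεm huε0
    have hchain : Ffun f Ω μ
        ≤ ENNReal.ofReal ε * ENNReal.ofReal (D ^ p) + Ffun f Ω (densOn Ω uε) := by
      have h2 : Tcost p (densOn Ω uε) ν + Ffun f Ω (densOn Ω uε)
          ≤ Tcost p μ ν + (ENNReal.ofReal ε * ENNReal.ofReal (D ^ p)
              + Ffun f Ω (densOn Ω uε)) := by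
        rw [← add_assoc]
        exact add_le_add_left hTmix _
      exact (ENNReal.add_le_add_iff_left hTfin).mp (le_trans hminε h2)
    rw [hIμ, hFF] at hchain
    have hintnn : 0 ≤ᵐ[volume.restrict Ω] fun x => f (u x) :=
      Eventually.of_forall fun x => hf_nonneg _ (hu_nonneg x)
    have hintnnε : 0 ≤ᵐ[volume.restrict Ω] fun x => f (uε x) :=
      Eventually.of_forall fun x => hf_nonneg _ (huε0 x)
    rw [← ofReal_integral_eq_lintegral_ofReal int_fu hintnn,
      ← ofReal_integral_eq_lintegral_ofReal int_fuε hintnnε,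
      ← ENNReal.ofReal_mul hε0.le,
      ← ENNReal.ofReal_add (mul_nonneg hε0.le hDp0)
        (integral_nonneg fun x => hf_nonneg _ (huε0 x))] at hchain
    have hreal := (ENNReal.ofReal_le_ofReal_iff
      (add_nonneg (mul_nonneg hε0.le hDp0)
        (integral_nonneg fun x => hf_nonneg _ (huε0 x)))).mp hchain
    refine ⟨int_fuε, ?_⟩
    rw [integral_sub int_fu int_fuε]
    linarith
  -- the sequence ε_j = 1/(j+2)
  set e : ℕ → ℝ := fun j => ((j : ℝ) + 2)⁻¹ with hedef
  have he0 : ∀ j, 0 < e j := fun j => by positivity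
  have he1 : ∀ j, e j < 1 := fun j => by
    have : (1:ℝ) < (j : ℝ) + 2 := by
      have := Nat.cast_nonneg (α := ℝ) j; linarith
    exact inv_lt_one_of_one_lt₀ this
  have heanti : ∀ j k, j ≤ k → e k ≤ e j := by
    intro j k hjk
    have h1 : (0:ℝ) < (j : ℝ) + 2 := by positivity
    have h2 : (j : ℝ) + 2 ≤ (k : ℝ) + 2 := by
      have := (Nat.cast_le (α := ℝ)).mpr hjk; linarith
    exact inv_anti₀ h1 h2
  have helim : Tendsto e atTop (𝓝 0) := by
    apply tendsto_inv_atTop_zero.comp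
    exact tendsto_atTop_add_const_right _ _ tendsto_natCast_atTop_atTop
  have harg_nonneg : ∀ j x, 0 ≤ (1 - e j) * u x + e j * c := fun j x =>
    add_nonneg (mul_nonneg (by linarith [he1 j]) (hu_nonneg x))
      (mul_nonneg (he0 j).le hcpos.le)
  have hstep : ∀ δ δ' : ℝ, 0 < δ' → δ' ≤ δ → δ < 1 → ∀ x,
      f' ((1 - δ) * u x + δ * c) * (u x - c)
        ≤ f' ((1 - δ') * u x + δ' * c) * (u x - c) := by
    intro δ δ' hδ' hle hδ1 x
    have h0δ : 0 < δ := lt_of_lt_of_le hδ' hle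
    have hargδ : 0 ≤ (1 - δ) * u x + δ * c :=
      add_nonneg (mul_nonneg (by linarith) (hu_nonneg x)) (mul_nonneg h0δ.le hcpos.le)
    have hargδ' : 0 ≤ (1 - δ') * u x + δ' * c :=
      add_nonneg (mul_nonneg (by linarith) (hu_nonneg x)) (mul_nonneg hδ'.le hcpos.le)
    rcases le_total c (u x) with hcu | hcu
    · have harg_le : (1 - δ) * u x + δ * c ≤ (1 - δ') * u x + δ' * c := by nlinarith
      exact mul_le_mul_of_nonneg_right
        (hf'mono (mem_Ici.mpr hargδ) (mem_Ici.mpr hargδ') harg_le) (by linarith)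
    · have harg_le : (1 - δ') * u x + δ' * c ≤ (1 - δ) * u x + δ * c := by nlinarith
      exact mul_le_mul_of_nonpos_right
        (hf'mono (mem_Ici.mpr hargδ') (mem_Ici.mpr hargδ) harg_le) (by linarith)
  set g : ℕ → Rn n → ℝ := fun j x => f' ((1 - e j) * u x + e j * c) * (u x - c) + K
    with hgdef
  have hgmono : ∀ x, Monotone fun j => g j x := by
    intro x j k hjk
    have := hstep (e j) (e k) (he0 k) (heanti j k hjk) (he1 j) x
    simp only [hgdef]
    linarith
  have hgnonneg : ∀ j x, 0 ≤ g j x := by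
    intro j x
    rcases le_total c (u x) with hcu | hcu
    · have h1 : 0 ≤ f' ((1 - e j) * u x + e j * c) := hf'nonneg _ (harg_nonneg j x)
      have h2 : 0 ≤ f' ((1 - e j) * u x + e j * c) * (u x - c) :=
        mul_nonneg h1 (by linarith)
      simp only [hgdef]; linarith
    · have ha_le : (1 - e j) * u x + e j * c ≤ c := by nlinarith [he0 j, he1 j]
      have h1 : f' ((1 - e j) * u x + e j * c) ≤ f' c :=
        hf'mono (mem_Ici.mpr (harg_nonneg j x)) (mem_Ici.mpr hcpos.le) ha_le
      have h2 : f' ((1 - e j) * u x + e j * c) * (c - u x) ≤ f' c * c :=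
        mul_le_mul h1 (by linarith [hu_nonneg x]) (by linarith)
          (hf'nonneg c hcpos.le)
      simp only [hgdef, hK]
      nlinarith
  have hglim : ∀ x, Tendsto (fun j => g j x) atTop (𝓝 (f' (u x) * (u x - c) + K)) := by
    intro x
    have harg : Tendsto (fun j => (1 - e j) * u x + e j * c) atTop (𝓝 (u x)) := by
      have h1 : Tendsto (fun j : ℕ => (1 - e j) * u x + e j * c) atTop
          (𝓝 ((1 - 0) * u x + 0 * c)) := by
        exact ((tendsto_const_nhds.sub helim).mul tendsto_const_nhds).add
          (helim.mul tendsto_const_nhds)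
      simpa using h1
    have hf't : Tendsto (fun j => f' ((1 - e j) * u x + e j * c)) atTop
        (𝓝 (f' (u x))) := by
      refine ((hf'_cont (u x) (hu_nonneg x)).tendsto).comp ?_
      rw [tendsto_nhdsWithin_iff]
      exact ⟨harg, Eventually.of_forall fun j => harg_nonneg j x⟩
    exact (hf't.mul_const _).add_const _
  have hgmeas : ∀ j, Measurable fun x => g j x := by
    intro j
    have h1 : Measurable fun x => f' ((1 - e j) * u x + e j * c) :=
      hcomp1 _ ((hu_meas.const_mul _).add_const _) (harg_nonneg j)
    exact (h1.mul (hu_meas.sub measurable_const)).add_const K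
  -- uniform lintegral bound
  have hbound : ∀ j, ∫⁻ x in Ω, ENNReal.ofReal (g j x)
      ≤ ENNReal.ofReal (D ^ p + K * V) := by
    intro j
    obtain ⟨int_fuε, hkey⟩ := key (e j) (he0 j) (he1 j)
    have htan : ∀ x, e j * g j x
        ≤ (f (u x) - f ((1 - e j) * u x + e j * c)) + e j * K := by
      intro x
      have ht := aux_tangent hconv hf_deriv
        (mem_Ici.mpr (harg_nonneg j x)) (mem_Ici.mpr (hu_nonneg x))
      have h2 : u x - ((1 - e j) * u x + e j * c) = e j * (u x - c) := by ring
      rw [h2] at ht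
      simp only [hgdef]
      nlinarith [ht]
    have hsum_nonneg : ∀ x, 0 ≤ (f (u x) - f ((1 - e j) * u x + e j * c)) + e j * K :=
      fun x => le_trans (mul_nonneg (he0 j).le (hgnonneg j x)) (htan x)
    have hint_const : IntegrableOn (fun _ : Rn n => e j * K) Ω volume :=
      integrableOn_const hvol_lt.ne
    have hsub : IntegrableOn
        (fun x => f (u x) - f ((1 - e j) * u x + e j * c)) Ω volume :=
      int_fu.sub int_fuε
    have hint_sum : IntegrableOn
        (fun x => (f (u x) - f ((1 - e j) * u x + e j * c)) + e j * K) Ω volume :=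
      hsub.add hint_const
    have hintval : ∫ x in Ω, ((f (u x) - f ((1 - e j) * u x + e j * c)) + e j * K)
        ≤ e j * (D ^ p + K * V) := by
      rw [integral_add hsub hint_const, setIntegral_const, smul_eq_mul]
      have hVe : volume.real Ω * (e j * K) = e j * (K * V) := by rw [measureReal_def, ← hV]; ring
      rw [hVe]
      have := hkey
      nlinarith [hkey]
    have hchain2 : ENNReal.ofReal (e j) * (∫⁻ x in Ω, ENNReal.ofReal (g j x))
        ≤ ENNReal.ofReal (e j) * ENNReal.ofReal (D ^ p + K * V) := by
      calc ENNReal.ofReal (e j) * (∫⁻ x in Ω, ENNReal.ofReal (g j x))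
          = ∫⁻ x in Ω, ENNReal.ofReal (e j * g j x) := by
            rw [← lintegral_const_mul _ ((hgmeas j).ennreal_ofReal)]
            exact lintegral_congr fun x => (ENNReal.ofReal_mul (he0 j).le).symm
        _ ≤ ∫⁻ x in Ω, ENNReal.ofReal
              ((f (u x) - f ((1 - e j) * u x + e j * c)) + e j * K) :=
            lintegral_mono fun x => ENNReal.ofReal_le_ofReal (htan x)
        _ = ENNReal.ofReal (∫ x in Ω,
              ((f (u x) - f ((1 - e j) * u x + e j * c)) + e j * K)) :=
            (ofReal_integral_eq_lintegral_ofReal hint_sum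
              (Eventually.of_forall hsum_nonneg)).symm
        _ ≤ ENNReal.ofReal (e j * (D ^ p + K * V)) := ENNReal.ofReal_le_ofReal hintval
        _ = ENNReal.ofReal (e j) * ENNReal.ofReal (D ^ p + K * V) :=
            ENNReal.ofReal_mul (he0 j).le
    exact (ENNReal.mul_le_mul_iff_right (ENNReal.ofReal_pos.mpr (he0 j)).ne'
      ENNReal.ofReal_ne_top).mp hchain2
  -- monotone convergence
  set h : Rn n → ℝ := fun x => f' (u x) * (u x - c) + K with hhdef
  have hhnonneg : ∀ x, 0 ≤ h x := fun x =>
    ge_of_tendsto (hglim x) (Eventually.of_forall fun j => hgnonneg j x)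
  have hhmeas : Measurable h :=
    ((hcomp1 u hu_meas hu_nonneg).mul (hu_meas.sub measurable_const)).add_const K
  have hmct : ∫⁻ x in Ω, ENNReal.ofReal (h x) ≤ ENNReal.ofReal (D ^ p + K * V) := by
    have hsup : ∀ x, (⨆ j, ENNReal.ofReal (g j x)) = ENNReal.ofReal (h x) := by
      intro x
      have hmono' : Monotone fun j => ENNReal.ofReal (g j x) := fun a b hab =>
        ENNReal.ofReal_le_ofReal (hgmono x hab)
      have ht : Tendsto (fun j => ENNReal.ofReal (g j x)) atTop
          (𝓝 (ENNReal.ofReal (h x))) :=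
        (ENNReal.continuous_ofReal.tendsto _).comp (hglim x)
      exact tendsto_nhds_unique (tendsto_atTop_iSup hmono') ht
    calc ∫⁻ x in Ω, ENNReal.ofReal (h x)
        = ∫⁻ x in Ω, ⨆ j, ENNReal.ofReal (g j x) :=
          lintegral_congr fun x => (hsup x).symm
      _ = ⨆ j, ∫⁻ x in Ω, ENNReal.ofReal (g j x) :=
          lintegral_iSup (fun j => (hgmeas j).ennreal_ofReal)
            (fun a b hab x => ENNReal.ofReal_le_ofReal (hgmono x hab))
      _ ≤ ENNReal.ofReal (D ^ p + K * V) := iSup_le hbound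
  have hint_h : IntegrableOn h Ω volume :=
    int_of h hhmeas hhnonneg (ne_top_of_le_ne_top ENNReal.ofReal_ne_top hmct)
  -- conclusion
  have hb1 : ∀ x, f' (u x) ≤ f' (2 * c) + h x / c := by
    intro x
    rcases le_total (u x) (2 * c) with hx | hx
    · have h1 : f' (u x) ≤ f' (2 * c) :=
        hf'mono (mem_Ici.mpr (hu_nonneg x)) (mem_Ici.mpr (by linarith)) hx
      have h2 : 0 ≤ h x / c := div_nonneg (hhnonneg x) hcpos.le
      linarith
    · have h1 : f' (u x) * c ≤ f' (u x) * (u x - c) :=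
        mul_le_mul_of_nonneg_left (by linarith) (hf'nonneg _ (hu_nonneg x))
      have h2 : f' (u x) * (u x - c) ≤ h x := by simp only [hhdef]; linarith [hKnn]
      have h3 : f' (u x) ≤ h x / c := (le_div_iff₀ hcpos).mpr (by linarith)
      have h4 : 0 ≤ f' (2 * c) := hf'nonneg _ (by linarith)
      linarith
  have hbound1int : IntegrableOn (fun x => f' (2 * c) + h x / c) Ω volume :=
    (integrableOn_const hvol_lt.ne).add (hint_h.div_const c)
  have res1 : IntegrableOn (fun x => f' (u x)) Ω volume := by
    refine Integrable.mono' hbound1int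
      (hcomp1 u hu_meas hu_nonneg).aestronglyMeasurable
      (Eventually.of_forall fun x => ?_)
    rw [Real.norm_of_nonneg (hf'nonneg _ (hu_nonneg x))]
    exact hb1 x
  have hb2 : ∀ x, u x * f' (u x) ≤ 2 * h x + c * f' (2 * c) := by
    intro x
    have h5 := hb1 x
    have h7 : f' (u x) * (u x - c) ≤ h x := by simp only [hhdef]; linarith [hKnn]
    have h8 : c * f' (u x) ≤ c * (f' (2 * c) + h x / c) :=
      mul_le_mul_of_nonneg_left h5 hcpos.le
    have h8' : c * (f' (2 * c) + h x / c) = c * f' (2 * c) + h x := by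
      field_simp
    have h10 : u x * f' (u x) = f' (u x) * (u x - c) + c * f' (u x) := by ring
    have hhx : h x = f' (u x) * (u x - c) + K := rfl
    linarith
  have hbound2int : IntegrableOn (fun x => 2 * h x + c * f' (2 * c)) Ω volume :=
    ((hint_h.const_mul 2).add (integrableOn_const hvol_lt.ne))
  have res2 : IntegrableOn (fun x => u x * f' (u x)) Ω volume := by
    refine Integrable.mono' hbound2int
      (hu_meas.mul (hcomp1 u hu_meas hu_nonneg)).aestronglyMeasurable
      (Eventually.of_forall fun x => ?_)
    rw [Real.norm_of_nonneg (mul_nonneg (hu_nonneg x) (hf'nonneg _ (hu_nonneg x)))]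
    exact hb2 x
  exact ⟨res1, res2⟩
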